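/- With the setup of the generalized resultant (F = GF(q), α of multiplicative order at least r, positive μ_0,…,μ_ℓ summing to r, τ_i = r − μ_i, echelon matrices A_i(β_i) built from the coefficients of M_i(x;β_i) = Π_{j=0}^{τ_i−1}(x − β_i α^j), and A(β) their stacking), the multivariate polynomial Δ(β) = det(A(β)) in the indeterminates β_0, …, β_ℓ is not identically zero; in particular, Δ evaluated at β*_i = α^{μ_0 + μ_1 + ⋯ + μ_i} (for 0 ≤ i ≤ ℓ) is nonzero. -/

import Mathlib

open Polynomial Finset

private lemma burst_pow_ne {F : Type*} [Field F] {α : F} (hα : α ≠ 0) {r a b : ℕ}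
    (hord : r ≤ orderOf α) (hab : a < b) (h : b - a < r) : α ^ a ≠ α ^ b := by
  intro h'
  have h1 : α ^ a * α ^ (b - a) = α ^ a * 1 := by
    rw [mul_one, ← pow_add, Nat.add_sub_cancel' hab.le, h']
  have h2 : α ^ (b - a) = 1 := mul_left_cancel₀ (pow_ne_zero _ hα) h1
  have := Nat.le_of_dvd (Nat.sub_pos_of_lt hab) (orderOf_dvd_of_pow_eq_one h2)
  omega

private lemma burst_block_exists (ν : ℕ → ℕ) :
    ∀ N s : ℕ, s < ∑ t ∈ Finset.range N, ν t →
      ∃ n < N, (∑ t ∈ Finset.range n, ν t) ≤ s ∧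
        s < (∑ t ∈ Finset.range n, ν t) + ν n := by
  intro N
  induction N with
  | zero => simp
  | succ N ih =>
    intro s hs
    by_cases h : s < ∑ t ∈ Finset.range N, ν t
    · obtain ⟨n, hn, h1, h2⟩ := ih s h
      exact ⟨n, by omega, h1, h2⟩
    · refine ⟨N, by omega, by omega, ?_⟩
      rw [Finset.sum_range_succ] at hs
      omega



/-- The polynomial `M_i(x; β_i) = Π_{j=0}^{τ_i - 1} (x - β_i α^j)`, `τ_i = r - μ_i`,
viewed as a univariate polynomial in `x` whose coefficients are multivariate
polynomials over `F` in the indeterminates `β_0, …, β_ℓ`. -/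
noncomputable def burstM (F : Type*) [Field F] (ℓ r : ℕ) (α : F)
    (μ : Fin (ℓ + 1) → ℕ) (i : Fin (ℓ + 1)) :
    Polynomial (MvPolynomial (Fin (ℓ + 1)) F) :=
  ∏ j ∈ Finset.range (r - μ i),
    (Polynomial.X - Polynomial.C (MvPolynomial.C (α ^ j) * MvPolynomial.X i))

/-- The `r × r` matrix `A(β)` obtained by stacking the `μ_i × r` echelon
matrices `A_i(β_i)`: rows `s` with `Σ_{k<i} μ_k ≤ s < Σ_{k≤i} μ_k` belong to the
`i`-th block; such a row, with offset `h = s - Σ_{k<i} μ_k`, carries the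
coefficients `M_{i,0}, …, M_{i,τ_i}` of `M_i(x; β_i)` in columns `h, …, h + τ_i`
and zeros elsewhere. (Exactly one summand below is nonzero for each row.) -/
noncomputable def burstA (F : Type*) [Field F] (ℓ r : ℕ) (α : F)
    (μ : Fin (ℓ + 1) → ℕ) :
    Matrix (Fin r) (Fin r) (MvPolynomial (Fin (ℓ + 1)) F) :=
  Matrix.of fun s j =>
    ∑ i : Fin (ℓ + 1),
      if (∑ k ∈ Finset.Iio i, μ k) ≤ (s : ℕ) ∧
          (s : ℕ) < (∑ k ∈ Finset.Iio i, μ k) + μ i ∧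
          (s : ℕ) - (∑ k ∈ Finset.Iio i, μ k) ≤ (j : ℕ) then
        (burstM F ℓ r α μ i).coeff
          ((j : ℕ) - ((s : ℕ) - ∑ k ∈ Finset.Iio i, μ k))
      else 0


/-- The multivariate polynomial `Δ(β) = det A(β)` is not
identically zero; in particular its evaluation at
`β*_i = α^{μ_0 + μ_1 + ⋯ + μ_i}` is nonzero. -/
theorem generalized_resultant_ne_zero (F : Type*) [Field F] [Fintype F]
    (ℓ r : ℕ) (hr : 1 ≤ r) (α : F) (hα : α ≠ 0) (hord : r ≤ orderOf α)
    (μ : Fin (ℓ + 1) → ℕ) (hμ : ∀ i, 1 ≤ μ i) (hsum : ∑ i, μ i = r) :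
    (burstA F ℓ r α μ).det ≠ 0 ∧
      MvPolynomial.eval (fun i => α ^ (∑ k ∈ Finset.Iic i, μ k))
        (burstA F ℓ r α μ).det ≠ 0 := by
  classical
  set β : Fin (ℓ + 1) → F := fun i => α ^ (∑ k ∈ Finset.Iic i, μ k) with hβ
  set ev : MvPolynomial (Fin (ℓ + 1)) F →+* F := MvPolynomial.eval β with hev
  -- reduce to the evaluated matrix
  set B : Matrix (Fin r) (Fin r) F := (burstA F ℓ r α μ).map ev with hB
  suffices hBdet : B.det ≠ 0 by
    have hdet : ev (burstA F ℓ r α μ).det = B.det := RingHom.map_det ev _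
    constructor
    · intro h0
      rw [h0, map_zero] at hdet
      exact hBdet hdet.symm
    · show ev (burstA F ℓ r α μ).det ≠ 0
      rw [hdet]; exact hBdet
  -- ℕ-indexed block data
  set ν : ℕ → ℕ := fun t => if h : t < ℓ + 1 then μ ⟨t, h⟩ else 0 with hν
  set σn : ℕ → ℕ := fun n => ∑ t ∈ Finset.range n, ν t with hσn
  have hνi : ∀ i : Fin (ℓ + 1), ν (i : ℕ) = μ i := by
    intro i; simp [hν, i.isLt]; intro h; exact absurd i.isLt (by omega)
  have hσsucc : ∀ n, σn (n + 1) = σn n + ν n := fun n => Finset.sum_range_succ ν n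
  have hσ : ∀ i : Fin (ℓ + 1), (∑ k ∈ Finset.Iio i, μ k) = σn (i : ℕ) := by
    intro i
    show _ = ∑ t ∈ Finset.range (i : ℕ), ν t
    rw [← Nat.Iio_eq_range, ← Fin.map_valEmbedding_Iio (a := i), Finset.sum_map]
    exact Finset.sum_congr rfl fun k _ => (hνi k).symm
  have hσIic : ∀ i : Fin (ℓ + 1), (∑ k ∈ Finset.Iic i, μ k) = σn ((i : ℕ) + 1) := by
    intro i
    rw [← Finset.Iio_insert, Finset.sum_insert (by simp), hσ, hσsucc, hνi]
    omega
  have hσmono : ∀ a b : ℕ, a ≤ b → σn a ≤ σn b := by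
    intro a b hab
    exact Finset.sum_le_sum_of_subset (Finset.range_subset_range.mpr hab)
  have hσr : σn (ℓ + 1) = r := by
    rw [← hsum]
    show ∑ t ∈ Finset.range (ℓ + 1), ν t = _
    rw [← Fin.sum_univ_eq_sum_range]
    exact Finset.sum_congr rfl fun k _ => hνi k
  have hblocksub : ∀ i : Fin (ℓ + 1), σn (i : ℕ) + μ i ≤ r := by
    intro i
    have := hσmono ((i : ℕ) + 1) (ℓ + 1) i.isLt
    rw [hσsucc, hνi] at this
    omega
  -- the evaluated polynomials
  set mE : Fin (ℓ + 1) → F[X] :=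
    fun i => ∏ j ∈ Finset.range (r - μ i), (X - C (α ^ (σn ((i : ℕ) + 1) + j))) with hmE
  have hcoeff : ∀ (i : Fin (ℓ + 1)) (d : ℕ),
      ev ((burstM F ℓ r α μ i).coeff d) = (mE i).coeff d := by
    intro i d
    have hmap : (burstM F ℓ r α μ i).map ev = mE i := by
      rw [burstM, hmE, Polynomial.map_prod]
      refine Finset.prod_congr rfl fun j _ => ?_
      rw [Polynomial.map_sub, Polynomial.map_X, Polynomial.map_C]
      congr 1
      simp only [hev, map_mul, MvPolynomial.eval_C, MvPolynomial.eval_X, hβ]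
      rw [hσIic i, ← C_mul, ← pow_add, Nat.add_comm]
    rw [← hmap, Polynomial.coeff_map]
  have hmEdeg : ∀ i : Fin (ℓ + 1), (mE i).natDegree = r - μ i := by
    intro i
    rw [hmE]
    rw [Polynomial.natDegree_prod_of_monic _ _ (fun j _ => monic_X_sub_C _)]
    simp only [Polynomial.natDegree_X_sub_C, Finset.sum_const, smul_eq_mul, mul_one,
      Finset.card_range]
  have hmEzero : ∀ (i : Fin (ℓ + 1)) (m : ℕ), σn ((i : ℕ) + 1) ≤ m → m < r →
      (mE i).eval (α ^ m) = 0 := by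
    intro i m h1 h2
    rw [hmE, Polynomial.eval_prod]
    apply Finset.prod_eq_zero (i := m - σn ((i : ℕ) + 1))
    · have : σn (i : ℕ) + μ i = σn ((i : ℕ) + 1) := by rw [hσsucc, hνi]
      refine Finset.mem_range.mpr ?_
      omega
    · rw [Polynomial.eval_sub, Polynomial.eval_X, Polynomial.eval_C,
        Nat.add_sub_cancel' h1, sub_self]
  have hmEne : ∀ (i : Fin (ℓ + 1)) (m : ℕ), σn (i : ℕ) ≤ m → m < σn ((i : ℕ) + 1) →
      (mE i).eval (α ^ m) ≠ 0 := by
    intro i m h1 h2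
    rw [hmE, Polynomial.eval_prod]
    refine Finset.prod_ne_zero_iff.mpr fun j hj => ?_
    rw [Polynomial.eval_sub, Polynomial.eval_X, Polynomial.eval_C, sub_ne_zero]
    have hj' : j < r - μ i := Finset.mem_range.mp hj
    have hsm : σn (i : ℕ) + μ i = σn ((i : ℕ) + 1) := by rw [hσsucc, hνi]
    exact burst_pow_ne hα hord (by omega) (by omega)
  -- suppose det B = 0
  by_contra hdet0
  obtain ⟨v, hv0, hvB⟩ := (Matrix.exists_vecMul_eq_zero_iff (M := B)).mpr hdet0
  -- block index of each row
  have hblock : ∀ s : Fin r, ∃ i : Fin (ℓ + 1),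
      σn (i : ℕ) ≤ (s : ℕ) ∧ (s : ℕ) < σn (i : ℕ) + μ i := by
    intro s
    obtain ⟨n, hn, h1, h2⟩ := burst_block_exists ν (ℓ + 1) s
      (by show (s : ℕ) < σn (ℓ + 1); rw [hσr]; exact s.isLt)
    have hee : σn n = ∑ t ∈ Finset.range n, ν t := rfl
    have hmm2 : ν n = μ (⟨n, hn⟩ : Fin (ℓ + 1)) := hνi ⟨n, hn⟩
    refine ⟨⟨n, hn⟩, ?_, ?_⟩ <;> simp only [Fin.val_mk] <;> omega
  choose idx hidx1 hidx2 using hblock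
  have huniq : ∀ (s : Fin r) (i : Fin (ℓ + 1)),
      σn (i : ℕ) ≤ (s : ℕ) → (s : ℕ) < σn (i : ℕ) + μ i → i = idx s := by
    intro s i h1 h2
    by_contra hne
    have key : ∀ a b : Fin (ℓ + 1), a < b → σn (a : ℕ) + μ a ≤ σn (b : ℕ) := by
      intro a b hab
      have := hσmono ((a : ℕ) + 1) (b : ℕ) hab
      rw [hσsucc, hνi] at this
      exact this
    rcases lt_or_gt_of_ne hne with h | h
    · have := key i (idx s) h
      have := hidx1 s
      omega
    · have := key (idx s) i h
      have := hidx2 s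
      omega
  -- row entries of B
  have hBentry : ∀ s j : Fin r,
      B s j = if ((s : ℕ) - σn ((idx s : Fin (ℓ + 1)) : ℕ)) ≤ (j : ℕ) then
        (mE (idx s)).coeff ((j : ℕ) - ((s : ℕ) - σn ((idx s : Fin (ℓ + 1)) : ℕ))) else 0 := by
    intro s j
    show ev (burstA F ℓ r α μ s j) = _
    rw [burstA]
    simp only [Matrix.of_apply, map_sum, apply_ite ev, map_zero, hcoeff, hσ]
    rw [Finset.sum_eq_single (idx s)]
    · by_cases hcase : (s : ℕ) - σn ((idx s : Fin (ℓ + 1)) : ℕ) ≤ (j : ℕ)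
      · rw [if_pos ⟨hidx1 s, hidx2 s, hcase⟩, if_pos hcase]
      · rw [if_neg, if_neg hcase]
        intro ⟨c1, c2, c3⟩
        exact hcase c3
    · intro i _ hne
      rw [if_neg]
      intro ⟨c1, c2, c3⟩
      exact hne (huniq s i c1 c2)
    · intro h; exact absurd (Finset.mem_univ _) h
  have hoff : ∀ s : Fin r, (s : ℕ) - σn ((idx s : Fin (ℓ + 1)) : ℕ) < μ (idx s) := by
    intro s; have := hidx1 s; have := hidx2 s; omega
  -- the polynomial built from the kernel vector
  set P : F[X] := ∑ s : Fin r,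
      C (v s) * (mE (idx s) * X ^ ((s : ℕ) - σn ((idx s : Fin (ℓ + 1)) : ℕ))) with hP
  have hP0 : P = 0 := by
    ext j
    rw [hP, Polynomial.finset_sum_coeff, Polynomial.coeff_zero]
    by_cases hj : j < r
    · have h0 := congrFun hvB ⟨j, hj⟩
      simp only [Matrix.vecMul, dotProduct, Pi.zero_apply] at h0
      rw [← h0]
      refine Finset.sum_congr rfl fun s _ => ?_
      rw [Polynomial.coeff_C_mul, Polynomial.coeff_mul_X_pow', hBentry s ⟨j, hj⟩]
    · refine Finset.sum_eq_zero fun s _ => ?_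
      apply Polynomial.coeff_eq_zero_of_natDegree_lt
      calc (C (v s) * (mE (idx s) * X ^ ((s : ℕ) - σn ((idx s : Fin (ℓ + 1)) : ℕ)))).natDegree
          ≤ (mE (idx s) * X ^ ((s : ℕ) - σn ((idx s : Fin (ℓ + 1)) : ℕ))).natDegree :=
            Polynomial.natDegree_C_mul_le _ _
        _ ≤ (mE (idx s)).natDegree +
              (X ^ ((s : ℕ) - σn ((idx s : Fin (ℓ + 1)) : ℕ)) : F[X]).natDegree :=
            Polynomial.natDegree_mul_le
        _ < r := by
            rw [hmEdeg, Polynomial.natDegree_X_pow]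
            have h1 := hoff s
            have h2 := hblocksub (idx s)
            have h3 := hμ (idx s)
            omega
        _ ≤ j := le_of_not_gt hj
  have hPeval : ∀ m : ℕ,
      ∑ s : Fin r, v s * (Polynomial.eval (α ^ m) (mE (idx s)) *
        (α ^ m) ^ ((s : ℕ) - σn ((idx s : Fin (ℓ + 1)) : ℕ))) = 0 := by
    intro m
    have h0 : Polynomial.eval (α ^ m) P = 0 := by rw [hP0, Polynomial.eval_zero]
    rw [hP, Polynomial.eval_finset_sum] at h0
    rw [← h0]
    refine Finset.sum_congr rfl fun s _ => ?_
    rw [Polynomial.eval_mul, Polynomial.eval_C, Polynomial.eval_mul, Polynomial.eval_pow,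
      Polynomial.eval_X]
  -- downward induction on the blocks
  have key : ∀ n : ℕ, ∀ i : Fin (ℓ + 1), ℓ - (i : ℕ) < n → ∀ s : Fin r, idx s = i → v s = 0 := by
    intro n
    induction n with
    | zero => intro i hi; omega
    | succ n ih =>
      intro i hi s hs
      have IHgt : ∀ s' : Fin r, (i : ℕ) < ((idx s' : Fin (ℓ + 1)) : ℕ) → v s' = 0 := by
        intro s' h'
        exact ih (idx s') (by omega) s' rfl
      set q : F[X] := ∑ s' ∈ Finset.univ.filter (fun s' : Fin r => idx s' = i),
          C (v s') * X ^ ((s' : ℕ) - σn (i : ℕ)) with hq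
      have hqeval : ∀ m : ℕ, σn (i : ℕ) ≤ m → m < σn (i : ℕ) + μ i →
          Polynomial.eval (α ^ m) q = 0 := by
        intro m hm1 hm2
        have h0 := hPeval m
        rw [← Finset.sum_filter_add_sum_filter_not Finset.univ
          (fun s' : Fin r => idx s' = i)] at h0
        have hnot : ∑ s' ∈ Finset.univ.filter (fun s' : Fin r => ¬ idx s' = i),
            v s' * (Polynomial.eval (α ^ m) (mE (idx s')) *
              (α ^ m) ^ ((s' : ℕ) - σn ((idx s' : Fin (ℓ + 1)) : ℕ))) = 0 := by
          refine Finset.sum_eq_zero fun s' hs' => ?_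
          rw [Finset.mem_filter] at hs'
          rcases lt_or_gt_of_ne (fun hh : idx s' = i => hs'.2 hh) with hlt | hgt
          · -- idx s' < i : the polynomial mE (idx s') vanishes at α ^ m
            have hz : Polynomial.eval (α ^ m) (mE (idx s')) = 0 := by
              apply hmEzero
              · calc σn (((idx s' : Fin (ℓ + 1)) : ℕ) + 1) ≤ σn (i : ℕ) := hσmono _ _ hlt
                  _ ≤ m := hm1
              · have := hblocksub i; omega
            rw [hz, zero_mul, mul_zero]
          · rw [IHgt s' hgt, zero_mul]
        have hfil : ∑ s' ∈ Finset.univ.filter (fun s' : Fin r => idx s' = i),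
            v s' * (Polynomial.eval (α ^ m) (mE (idx s')) *
              (α ^ m) ^ ((s' : ℕ) - σn ((idx s' : Fin (ℓ + 1)) : ℕ))) = 0 := by
          rw [hnot, add_zero] at h0; exact h0
        have hqme : Polynomial.eval (α ^ m) q * Polynomial.eval (α ^ m) (mE i) = 0 := by
          rw [← hfil, hq, Polynomial.eval_finset_sum, Finset.sum_mul]
          refine Finset.sum_congr rfl fun s' hs' => ?_
          rw [Finset.mem_filter] at hs'
          rw [hs'.2, Polynomial.eval_mul, Polynomial.eval_C, Polynomial.eval_pow,
            Polynomial.eval_X]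
          ring
        have hne0 : Polynomial.eval (α ^ m) (mE i) ≠ 0 := by
          apply hmEne i m hm1
          rw [hσsucc, hνi]; omega
        exact (mul_eq_zero.mp hqme).resolve_right hne0
      have hqdeg : q.natDegree < μ i := by
        have h1 : q.natDegree ≤ μ i - 1 := by
          rw [hq]
          apply Polynomial.natDegree_sum_le_of_forall_le
          intro s' hs'
          rw [Finset.mem_filter] at hs'
          calc (C (v s') * X ^ ((s' : ℕ) - σn (i : ℕ))).natDegree
              ≤ (X ^ ((s' : ℕ) - σn (i : ℕ)) : F[X]).natDegree :=
                Polynomial.natDegree_C_mul_le _ _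
            _ ≤ μ i - 1 := by
                rw [Polynomial.natDegree_X_pow]
                have := hoff s'
                rw [hs'.2] at this
                omega
        have := hμ i
        omega
      have hq0 : q = 0 := by
        apply Polynomial.eq_zero_of_natDegree_lt_card_of_eval_eq_zero q
          (f := fun t : Fin (μ i) => α ^ (σn (i : ℕ) + (t : ℕ)))
        · intro a b hab
          by_contra hne
          have hsub := hblocksub i
          rcases lt_or_gt_of_ne (fun hh : (a : ℕ) = (b : ℕ) => hne (Fin.ext hh)) with h | h
          · exact burst_pow_ne hα hord (by omega) (by have := b.isLt; omega) hab
          · exact burst_pow_ne hα hord (by omega) (by have := a.isLt; omega) hab.symm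
        · intro t
          exact hqeval (σn (i : ℕ) + (t : ℕ)) (Nat.le_add_right _ _)
            (by have := t.isLt; omega)
        · rw [Fintype.card_fin]; exact hqdeg
      have hcoeffq : q.coeff ((s : ℕ) - σn (i : ℕ)) = v s := by
        rw [hq, Polynomial.finset_sum_coeff]
        rw [Finset.sum_eq_single_of_mem s (by simp [hs])]
        · rw [Polynomial.coeff_C_mul, Polynomial.coeff_X_pow, if_pos rfl, mul_one]
        · intro s' hs' hne
          rw [Finset.mem_filter] at hs'
          rw [Polynomial.coeff_C_mul, Polynomial.coeff_X_pow, if_neg, mul_zero]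
          intro hh
          apply hne
          have ha := hidx1 s'
          have hb := hidx1 s
          rw [hs'.2] at ha
          rw [hs] at hb
          exact Fin.ext (by omega)
      rw [← hcoeffq, hq0, Polynomial.coeff_zero]
  apply hv0
  funext s
  exact key (ℓ + 1) (idx s) (by omega) s rfl
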